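/- If the joint distribution factors as P(Y=y, M=m, R^M=r, R^Y=s | T=t, X=x) with R^M ⊥ (Y, R^Y) | (M, T, X) and R^Y ⊥ (M, R^M) | (Y, T, X), then for all y, m, t, x with positive conditioning probabilities: P(M=m, Y=y, R^M=1, R^Y=1 | T=t, X=x) = P(M=m, Y=y | T=t, X=x) · P(R^M=1 | M=m, T=t, X=x) · P(R^Y=1 | Y=y, T=t, X=x). -/

import Mathlib

open Finset
open scoped Classical

/-- The probability of the event `A` under the probability mass function `p`. -/
noncomputable def pr {Ω : Type*} [Fintype Ω] (p : Ω → ℝ) (A : Ω → Prop) : ℝ :=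
  ∑ ω, if A ω then p ω else 0

lemma pr_congr {Ω : Type*} [Fintype Ω] (p : Ω → ℝ) {A B : Ω → Prop}
    (h : ∀ ω, A ω ↔ B ω) : pr p A = pr p B := by
  unfold pr
  refine Finset.sum_congr rfl fun ω _ => ?_
  simp [h ω]

lemma pr_split {Ω : Type*} [Fintype Ω] (p : Ω → ℝ) (Q : Ω → Prop) (f : Ω → Bool) :
    pr p Q = pr p (fun ω => Q ω ∧ f ω = true) + pr p (fun ω => Q ω ∧ f ω = false) := by
  unfold pr
  rw [← Finset.sum_add_distrib]
  refine Finset.sum_congr rfl fun ω _ => ?_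
  by_cases h : Q ω <;> cases hf : f ω <;> simp [h, hf]

/-- The algebraic core of Theorem 3: with `R^M ⊥ (Y, R^Y) | (M, T, X)` and
`R^Y ⊥ (M, R^M) | (Y, T, X)`, for all `y, m, t, x` with positive conditioning
probabilities,
`P(M=m, Y=y, R^M=1, R^Y=1 | T=t, X=x) = P(M=m, Y=y | T=t, X=x) ·
  P(R^M=1 | M=m, T=t, X=x) · P(R^Y=1 | Y=y, T=t, X=x)`. -/
theorem theorem3_factorization
    {Ω 𝓜 𝓨 𝓣 𝓧 : Type*} [Fintype Ω] [Fintype 𝓜] [Fintype 𝓨] [Fintype 𝓣] [Fintype 𝓧]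
    (p : Ω → ℝ) (hp0 : ∀ ω, 0 ≤ p ω) (hp1 : ∑ ω, p ω = 1)
    (M : Ω → 𝓜) (Y : Ω → 𝓨) (RM RY : Ω → Bool) (T : Ω → 𝓣) (X : Ω → 𝓧)
    -- conditional independence  R^M ⊥ (Y, R^Y) | (M, T, X)
    (hCI1 : ∀ m y r s t x,
      pr p (fun ω => M ω = m ∧ T ω = t ∧ X ω = x) *
          pr p (fun ω => M ω = m ∧ T ω = t ∧ X ω = x ∧ RM ω = r ∧ Y ω = y ∧ RY ω = s) =
        pr p (fun ω => M ω = m ∧ T ω = t ∧ X ω = x ∧ RM ω = r) *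
          pr p (fun ω => M ω = m ∧ T ω = t ∧ X ω = x ∧ Y ω = y ∧ RY ω = s))
    -- conditional independence  R^Y ⊥ (M, R^M) | (Y, T, X)
    (hCI2 : ∀ m y r s t x,
      pr p (fun ω => Y ω = y ∧ T ω = t ∧ X ω = x) *
          pr p (fun ω => Y ω = y ∧ T ω = t ∧ X ω = x ∧ RY ω = s ∧ M ω = m ∧ RM ω = r) =
        pr p (fun ω => Y ω = y ∧ T ω = t ∧ X ω = x ∧ RY ω = s) *
          pr p (fun ω => Y ω = y ∧ T ω = t ∧ X ω = x ∧ M ω = m ∧ RM ω = r)) :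
    ∀ m y t x,
      0 < pr p (fun ω => T ω = t ∧ X ω = x) →
      0 < pr p (fun ω => M ω = m ∧ T ω = t ∧ X ω = x) →
      0 < pr p (fun ω => Y ω = y ∧ T ω = t ∧ X ω = x) →
      pr p (fun ω => M ω = m ∧ Y ω = y ∧ RM ω = true ∧ RY ω = true ∧ T ω = t ∧ X ω = x) /
          pr p (fun ω => T ω = t ∧ X ω = x) =
        (pr p (fun ω => M ω = m ∧ Y ω = y ∧ T ω = t ∧ X ω = x) /
            pr p (fun ω => T ω = t ∧ X ω = x)) *
          (pr p (fun ω => RM ω = true ∧ M ω = m ∧ T ω = t ∧ X ω = x) /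
            pr p (fun ω => M ω = m ∧ T ω = t ∧ X ω = x)) *
          (pr p (fun ω => RY ω = true ∧ Y ω = y ∧ T ω = t ∧ X ω = x) /
            pr p (fun ω => Y ω = y ∧ T ω = t ∧ X ω = x)) := by
  intro m y t x hC hA hB
  set A := pr p (fun ω => M ω = m ∧ T ω = t ∧ X ω = x) with hAdef
  set B := pr p (fun ω => Y ω = y ∧ T ω = t ∧ X ω = x) with hBdef
  set C := pr p (fun ω => T ω = t ∧ X ω = x) with hCdef
  set J := pr p (fun ω => M ω = m ∧ Y ω = y ∧ RM ω = true ∧ RY ω = true ∧ T ω = t ∧ X ω = x) with hJdef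
  set PMY := pr p (fun ω => M ω = m ∧ Y ω = y ∧ T ω = t ∧ X ω = x) with hPMYdef
  set PRM := pr p (fun ω => RM ω = true ∧ M ω = m ∧ T ω = t ∧ X ω = x) with hPRMdef
  set PRY := pr p (fun ω => RY ω = true ∧ Y ω = y ∧ T ω = t ∧ X ω = x) with hPRYdef
  set K := pr p (fun ω => Y ω = y ∧ T ω = t ∧ X ω = x ∧ RY ω = true ∧ M ω = m) with hKdef
  -- equation 1: A * J = PRM * K
  have q1 : pr p (fun ω => M ω = m ∧ T ω = t ∧ X ω = x ∧ RM ω = true ∧ Y ω = y ∧ RY ω = true) = J :=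
    pr_congr p (fun ω => by tauto)
  have q2 : pr p (fun ω => M ω = m ∧ T ω = t ∧ X ω = x ∧ RM ω = true) = PRM :=
    pr_congr p (fun ω => by tauto)
  have q3 : pr p (fun ω => M ω = m ∧ T ω = t ∧ X ω = x ∧ Y ω = y ∧ RY ω = true) = K :=
    pr_congr p (fun ω => by tauto)
  have e1 : A * J = PRM * K := by
    have h := hCI1 m y true true t x
    rw [q1, q2, q3] at h
    exact h
  -- equation 2: B * K = PRY * PMY
  have e2 : B * K = PRY * PMY := by
    have h1 := hCI2 m y true true t x
    have h2 := hCI2 m y false true t x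
    have hsplitL : K = pr p (fun ω => Y ω = y ∧ T ω = t ∧ X ω = x ∧ RY ω = true ∧ M ω = m ∧ RM ω = true)
        + pr p (fun ω => Y ω = y ∧ T ω = t ∧ X ω = x ∧ RY ω = true ∧ M ω = m ∧ RM ω = false) := by
      rw [hKdef, pr_split p _ RM]
      congr 1 <;> exact pr_congr p (fun ω => by tauto)
    have hsplitR : PMY = pr p (fun ω => Y ω = y ∧ T ω = t ∧ X ω = x ∧ M ω = m ∧ RM ω = true)
        + pr p (fun ω => Y ω = y ∧ T ω = t ∧ X ω = x ∧ M ω = m ∧ RM ω = false) := by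
      rw [hPMYdef, pr_split p _ RM]
      congr 1 <;> exact pr_congr p (fun ω => by tauto)
    have hPRY' : pr p (fun ω => Y ω = y ∧ T ω = t ∧ X ω = x ∧ RY ω = true) = PRY :=
      pr_congr p (fun ω => by tauto)
    rw [hsplitL, hsplitR, mul_add, mul_add, h1, h2, hPRY']
  have hA' : A ≠ 0 := ne_of_gt hA
  have hB' : B ≠ 0 := ne_of_gt hB
  have hC' : C ≠ 0 := ne_of_gt hC
  field_simp
  linear_combination B * e1 + PRM * e2
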